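/- The function h_b(n) := Σ_{j=1}^{n} (j,n)_b satisfies the convolution identity h_b(n) = Σ_{d^b | n} d · φ_b(n/d^b), where φ_b(m) := #{k ≤ m : (k,m)_b = 1} is Klee's totient. -/

import Mathlib

/-- The generalized gcd: the largest `d ≥ 1` with `d^b ∣ r` and `d^b ∣ s`. -/
noncomputable def ggcd (b r s : ℕ) : ℕ := sSup {d : ℕ | 0 < d ∧ d ^ b ∣ r ∧ d ^ b ∣ s}

/-- The generalized gcd-sum function `h_b(n) = ∑_{j ≤ n} (j,n)_b`. -/
noncomputable def hgcd (b n : ℕ) : ℕ := ∑ j ∈ Finset.Icc 1 n, ggcd b j n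

/-- Klee's totient `φ_b(n) = #{1 ≤ k ≤ n : (k,n)_b = 1}`. -/
noncomputable def klee (b n : ℕ) : ℕ :=
  ((Finset.Icc 1 n).filter (fun k => ggcd b k n = 1)).card

lemma ggcd_bdd {b s : ℕ} (hb : 1 ≤ b) (hs : 0 < s) (r : ℕ) :
    BddAbove {d : ℕ | 0 < d ∧ d ^ b ∣ r ∧ d ^ b ∣ s} := by
  refine ⟨s, fun d hd => ?_⟩
  calc d ≤ d ^ b := Nat.le_self_pow (by omega) d
  _ ≤ s := Nat.le_of_dvd hs hd.2.2

lemma ggcd_mem {b s : ℕ} (hb : 1 ≤ b) (hs : 0 < s) (r : ℕ) :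
    0 < ggcd b r s ∧ (ggcd b r s) ^ b ∣ r ∧ (ggcd b r s) ^ b ∣ s := by
  have h1 : (1 : ℕ) ∈ {d : ℕ | 0 < d ∧ d ^ b ∣ r ∧ d ^ b ∣ s} := ⟨one_pos, by simp, by simp⟩
  exact Nat.sSup_mem ⟨1, h1⟩ (ggcd_bdd hb hs r)

lemma le_ggcd {b s d : ℕ} (hb : 1 ≤ b) (hs : 0 < s) (r : ℕ) (hd : 0 < d)
    (h1 : d ^ b ∣ r) (h2 : d ^ b ∣ s) : d ≤ ggcd b r s :=
  le_csSup (ggcd_bdd hb hs r) ⟨hd, h1, h2⟩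

lemma gcd_pow_eq (a c k : ℕ) (ha : 0 < a) (hc : 0 < c) :
    Nat.gcd (a ^ k) (c ^ k) = Nat.gcd a c ^ k := by
  set g := Nat.gcd a c with hg
  have hg0 : 0 < g := Nat.gcd_pos_of_pos_left _ ha
  have ha' : a = g * (a / g) := (Nat.mul_div_cancel' (Nat.gcd_dvd_left a c)).symm
  have hc' : c = g * (c / g) := (Nat.mul_div_cancel' (Nat.gcd_dvd_right a c)).symm
  have hcop : Nat.Coprime (a / g) (c / g) := Nat.coprime_div_gcd_div_gcd hg0
  calc Nat.gcd (a ^ k) (c ^ k)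
      = Nat.gcd ((g * (a / g)) ^ k) ((g * (c / g)) ^ k) := by rw [← ha', ← hc']
    _ = Nat.gcd (g ^ k * (a / g) ^ k) (g ^ k * (c / g) ^ k) := by rw [mul_pow, mul_pow]
    _ = g ^ k * Nat.gcd ((a / g) ^ k) ((c / g) ^ k) := Nat.gcd_mul_left _ _ _
    _ = g ^ k * 1 := by
          rw [show Nat.gcd ((a / g) ^ k) ((c / g) ^ k) = 1 from hcop.pow k k]
    _ = g ^ k := mul_one _

lemma lcm_pow_dvd {a c k N : ℕ} (ha : 0 < a) (hc : 0 < c)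
    (h1 : a ^ k ∣ N) (h2 : c ^ k ∣ N) : Nat.lcm a c ^ k ∣ N := by
  have key : Nat.lcm a c ^ k = Nat.lcm (a ^ k) (c ^ k) := by
    have hg0 : 0 < Nat.gcd a c ^ k := pow_pos (Nat.gcd_pos_of_pos_left _ ha) k
    have hL : Nat.lcm a c ^ k * Nat.gcd a c ^ k = (a * c) ^ k := by
      rw [← mul_pow, mul_comm (Nat.lcm a c), Nat.gcd_mul_lcm]
    have hR : Nat.lcm (a ^ k) (c ^ k) * Nat.gcd a c ^ k = (a * c) ^ k := by
      rw [← gcd_pow_eq a c k ha hc, mul_comm, Nat.gcd_mul_lcm, ← mul_pow]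
    exact Nat.eq_of_mul_eq_mul_right hg0 (hL.trans hR.symm)
  rw [key]
  exact Nat.lcm_dvd h1 h2

/-- key lemma: if `d^b ∣ n` and `ggcd b k (n/d^b) = 1`, then `ggcd b (k*d^b) n = d`. -/
lemma ggcd_mul_eq {b n d k : ℕ} (hb : 1 ≤ b) (hn : 0 < n) (hd : 0 < d)
    (hdn : d ^ b ∣ n) (hk : ggcd b k (n / d ^ b) = 1) : ggcd b (k * d ^ b) n = d := by
  have hdb : 0 < d ^ b := pow_pos hd b
  obtain ⟨he0, he1, he2⟩ := ggcd_mem hb hn (k * d ^ b)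
  set e := ggcd b (k * d ^ b) n with he
  have hde : d ≤ e := le_ggcd hb hn _ hd (dvd_mul_left _ _) hdn
  -- show d ∣ e via lcm
  have hlcm1 : Nat.lcm e d ^ b ∣ k * d ^ b := lcm_pow_dvd he0 hd he1 (dvd_mul_left _ _)
  have hlcm2 : Nat.lcm e d ^ b ∣ n := lcm_pow_dvd he0 hd he2 hdn
  have hlpos : 0 < Nat.lcm e d := Nat.pos_of_ne_zero (Nat.lcm_ne_zero he0.ne' hd.ne')
  have hlle : Nat.lcm e d ≤ e := le_ggcd hb hn _ hlpos hlcm1 hlcm2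
  have hell : e ∣ Nat.lcm e d := Nat.dvd_lcm_left e d
  have hlcm_eq : Nat.lcm e d = e :=
    Nat.le_antisymm hlle (Nat.le_of_dvd hlpos hell)
  have hdvd : d ∣ e := hlcm_eq ▸ Nat.dvd_lcm_right e d
  obtain ⟨f, hf⟩ := hdvd
  have hf0 : 0 < f := by
    rcases Nat.eq_zero_or_pos f with h | h
    · subst h; rw [mul_zero] at hf; omega
    · exact h
  -- f^b ∣ k and f^b ∣ n/d^b
  have hfk : f ^ b ∣ k := by
    have : d ^ b * f ^ b ∣ d ^ b * k := by
      rw [← mul_pow]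
      rw [hf] at he1
      calc (d * f) ^ b ∣ k * d ^ b := he1
        _ = d ^ b * k := mul_comm _ _
    exact (mul_dvd_mul_iff_left hdb.ne').mp this
  have hfn : f ^ b ∣ n / d ^ b := by
    have : d ^ b * f ^ b ∣ n := by
      rw [← mul_pow]
      rw [hf] at he2; exact he2
    exact (Nat.dvd_div_iff_mul_dvd hdn).mpr this
  have hnd : 0 < n / d ^ b := Nat.div_pos (Nat.le_of_dvd hn hdn) hdb
  have hfle : f ≤ 1 := hk ▸ le_ggcd hb hnd k hf0 hfk hfn
  have hfeq : f = 1 := le_antisymm hfle hf0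
  rw [hf, hfeq, mul_one]

theorem hgcd_eq_sum_klee (b n : ℕ) (hb : 2 ≤ b) (hn : 1 ≤ n) :
    hgcd b n = ∑ d ∈ (Finset.Icc 1 n).filter (fun d => d ^ b ∣ n),
      d * klee b (n / d ^ b) := by
  have hb1 : 1 ≤ b := by omega
  have hn0 : 0 < n := hn
  have hmaps : ∀ j ∈ Finset.Icc 1 n,
      ggcd b j n ∈ (Finset.Icc 1 n).filter (fun d => d ^ b ∣ n) := by
    intro j hj
    obtain ⟨h0, h1, h2⟩ := ggcd_mem hb1 hn0 j
    refine Finset.mem_filter.mpr ⟨Finset.mem_Icc.mpr ⟨h0, ?_⟩, h2⟩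
    calc ggcd b j n ≤ ggcd b j n ^ b := Nat.le_self_pow (by omega) _
      _ ≤ n := Nat.le_of_dvd hn0 h2
  rw [hgcd, ← Finset.sum_fiberwise_of_maps_to hmaps]
  refine Finset.sum_congr rfl fun d hd => ?_
  obtain ⟨hd', hdn⟩ := Finset.mem_filter.mp hd
  obtain ⟨hd1, hdlen⟩ := Finset.mem_Icc.mp hd'
  have hd0 : 0 < d := hd1
  have hdb : 0 < d ^ b := pow_pos hd0 b
  have hnd : 0 < n / d ^ b := Nat.div_pos (Nat.le_of_dvd hn0 hdn) hdb
  rw [Finset.sum_congr rfl (fun j hj => (Finset.mem_filter.mp hj).2),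
    Finset.sum_const, smul_eq_mul, mul_comm]
  congr 1
  -- card of fiber = klee b (n / d^b)
  rw [klee]
  apply Finset.card_bij (fun j _ => j / d ^ b)
  · -- maps into
    intro j hj
    obtain ⟨hj1, hj2⟩ := Finset.mem_filter.mp hj
    obtain ⟨hjlo, hjhi⟩ := Finset.mem_Icc.mp hj1
    obtain ⟨g0, g1, g2⟩ := ggcd_mem hb1 hn0 j
    rw [hj2] at g0 g1 g2
    have hdvdj : d ^ b ∣ j := g1
    obtain ⟨k, hk⟩ := hdvdj
    have hjd : j / d ^ b = k := by rw [hk]; exact Nat.mul_div_cancel_left k hdb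
    have hk0 : 0 < k := by
      rcases Nat.eq_zero_or_pos k with h | h
      · subst h; rw [mul_zero] at hk; omega
      · exact h
    refine Finset.mem_filter.mpr ⟨Finset.mem_Icc.mpr ⟨by omega, ?_⟩, ?_⟩
    · exact Nat.div_le_div_right hjhi
    · -- ggcd b (j / d^b) (n / d^b) = 1
      rw [hjd]
      obtain ⟨e0, e1, e2⟩ := ggcd_mem hb1 hnd k
      set e := ggcd b k (n / d ^ b) with he
      have hed : (e * d) ^ b ∣ j := by
        rw [mul_pow, hk, mul_comm (e ^ b)]
        exact mul_dvd_mul dvd_rfl e1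
      have hed2 : (e * d) ^ b ∣ n := by
        rw [mul_pow]
        have := mul_dvd_mul e2 (dvd_refl (d ^ b))
        rwa [Nat.div_mul_cancel hdn] at this
      have hle : e * d ≤ ggcd b j n :=
        le_ggcd hb1 hn0 j (Nat.mul_pos e0 hd0) hed hed2
      rw [hj2] at hle
      have : e ≤ 1 :=
        Nat.le_of_mul_le_mul_right (by rw [one_mul]; exact hle) hd0
      omega
  · -- injective
    intro j1 hj1 j2 hj2 heq
    obtain ⟨_, g1⟩ := Finset.mem_filter.mp hj1
    obtain ⟨_, g2⟩ := Finset.mem_filter.mp hj2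
    have d1 : d ^ b ∣ j1 := by
      have := (ggcd_mem hb1 hn0 j1).2.1; rwa [g1] at this
    have d2 : d ^ b ∣ j2 := by
      have := (ggcd_mem hb1 hn0 j2).2.1; rwa [g2] at this
    rw [← Nat.div_mul_cancel d1, ← Nat.div_mul_cancel d2, heq]
  · -- surjective
    intro k hk
    obtain ⟨hk1, hk2⟩ := Finset.mem_filter.mp hk
    obtain ⟨hklo, hkhi⟩ := Finset.mem_Icc.mp hk1
    refine ⟨k * d ^ b, ?_, ?_⟩
    · refine Finset.mem_filter.mpr ⟨Finset.mem_Icc.mpr ⟨Nat.one_le_iff_ne_zero.mpr ?_, ?_⟩, ?_⟩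
      · positivity
      · calc k * d ^ b ≤ (n / d ^ b) * d ^ b := Nat.mul_le_mul_right _ hkhi
          _ ≤ n := Nat.div_mul_le_self n _
      · exact ggcd_mul_eq hb1 hn0 hd0 hdn hk2
    · exact Nat.mul_div_cancel k hdb
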